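/- arXiv:2409.13009 — 8 statements merged into one kernel-verified Lean document; each statement's English description precedes it below -/
import Mathlib

section
/- Let A, B, C be complex matrices (with A, C square of sizes m×m and n×n respectively, and B of size m×n) such that the block matrix fromBlocks A B Bᴴ C is positive semidefinite. Then [Re Tr(Bᴴ B)]² ≤ Re Tr(A²) · Re Tr(C²). -/
open Matrix ComplexOrder

lemma cs_herm {ι : Type*} [Fintype ι] (P Q : Matrix ι ι ℂ)
    (hP : P.IsHermitian) (hQ : Q.IsHermitian) :
    ((P * Q).trace.re) ^ 2 ≤ (P * P).trace.re * (Q * Q).trace.re := by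
  classical
  set f : EuclideanSpace ℂ (ι × ι) := WithLp.toLp 2 fun p : ι × ι => Q p.1 p.2 with hf
  set g : EuclideanSpace ℂ (ι × ι) := WithLp.toLp 2 fun p : ι × ι => P p.1 p.2 with hg
  have key : ∀ (X Y : Matrix ι ι ℂ), Y.IsHermitian →
      (X * Y).trace = ∑ p : ι × ι, (starRingEnd ℂ) (Y p.1 p.2) * X p.1 p.2 := by
    intro X Y hY
    rw [Matrix.trace, Fintype.sum_prod_type]
    simp only [Matrix.diag, Matrix.mul_apply]
    refine Finset.sum_congr rfl fun i _ => Finset.sum_congr rfl fun j _ => ?_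
    rw [← congrFun (congrFun hY j) i, Matrix.conjTranspose_apply, starRingEnd_apply]
    ring
  have hterm : ∀ z : ℂ, ((starRingEnd ℂ) z * z).re = ‖z‖ ^ 2 := fun z => by
    rw [mul_comm, Complex.mul_conj]
    simp [Complex.normSq_eq_norm_sq, ← Complex.ofReal_pow]
  have hPQ : (P * Q).trace = inner ℂ f g := by
    rw [key P Q hQ, PiLp.inner_apply]
    simp [RCLike.inner_apply, mul_comm, hf, hg]
  have hPP : (P * P).trace.re = ‖g‖ ^ 2 := by
    rw [key P P hP, EuclideanSpace.norm_eq, Real.sq_sqrt (by positivity),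
      Complex.re_sum]
    exact Finset.sum_congr rfl fun p _ => hterm _
  have hQQ : (Q * Q).trace.re = ‖f‖ ^ 2 := by
    rw [key Q Q hQ, EuclideanSpace.norm_eq, Real.sq_sqrt (by positivity),
      Complex.re_sum]
    exact Finset.sum_congr rfl fun p _ => hterm _
  rw [hPQ, hPP, hQQ]
  calc (inner ℂ f g : ℂ).re ^ 2 ≤ ‖(inner ℂ f g : ℂ)‖ ^ 2 := by
        rw [← sq_abs (inner ℂ f g : ℂ).re]
        refine pow_le_pow_left₀ (abs_nonneg _) ?_ 2
        simpa using Complex.abs_re_le_norm (inner ℂ f g : ℂ)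
      _ ≤ (‖f‖ * ‖g‖) ^ 2 := pow_le_pow_left₀ (norm_nonneg _) (norm_inner_le_norm f g) 2
      _ = ‖g‖ ^ 2 * ‖f‖ ^ 2 := by ring

/-- If the block matrix `fromBlocks A B Bᴴ C` is positive semidefinite, then
`[Re Tr(Bᴴ B)]² ≤ Re Tr(A²) ⬝ Re Tr(C²)`. -/
theorem block_psd_trace_inequality {m n : Type*} [Fintype m] [Fintype n]
    (A : Matrix m m ℂ) (B : Matrix m n ℂ) (C : Matrix n n ℂ)
    (h : (Matrix.fromBlocks A B Bᴴ C).PosSemidef) :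
    ((Bᴴ * B).trace.re) ^ 2 ≤ (A * A).trace.re * (C * C).trace.re := by
  classical
  obtain ⟨S, hS⟩ : ∃ S : Matrix (m ⊕ n) (m ⊕ n) ℂ, Matrix.fromBlocks A B Bᴴ C = Sᴴ * S := by
    open scoped MatrixOrder in
    have h0 : (0 : Matrix (m ⊕ n) (m ⊕ n) ℂ) ≤ Matrix.fromBlocks A B Bᴴ C :=
      Matrix.nonneg_iff_posSemidef.mpr h
    open scoped MatrixOrder in
    exact ⟨CFC.sqrt _, by
      rw [← Matrix.star_eq_conjTranspose, (CFC.sqrt_nonneg _).isSelfAdjoint.star_eq,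
        CFC.sqrt_mul_sqrt_self _ h0]⟩
  set S1 : Matrix (m ⊕ n) m ℂ := S.submatrix id Sum.inl with hS1
  set S2 : Matrix (m ⊕ n) n ℂ := S.submatrix id Sum.inr with hS2
  have hA : A = S1ᴴ * S1 := by
    ext i j
    have := congrFun (congrFun hS (Sum.inl i)) (Sum.inl j)
    simpa [Matrix.mul_apply, Matrix.conjTranspose_apply, hS1] using this
  have hB : B = S1ᴴ * S2 := by
    ext i j
    have := congrFun (congrFun hS (Sum.inl i)) (Sum.inr j)
    simpa [Matrix.mul_apply, Matrix.conjTranspose_apply, hS1, hS2] using this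
  have hC : C = S2ᴴ * S2 := by
    ext i j
    have := congrFun (congrFun hS (Sum.inr i)) (Sum.inr j)
    simpa [Matrix.mul_apply, Matrix.conjTranspose_apply, hS2] using this
  set P : Matrix (m ⊕ n) (m ⊕ n) ℂ := S1 * S1ᴴ with hP
  set Q : Matrix (m ⊕ n) (m ⊕ n) ℂ := S2 * S2ᴴ with hQ
  have trA : (A * A).trace = (P * P).trace := by
    rw [hA, hP]
    simp only [Matrix.mul_assoc]
    rw [Matrix.trace_mul_comm]
    simp only [Matrix.mul_assoc]
  have trC : (C * C).trace = (Q * Q).trace := by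
    rw [hC, hQ]
    simp only [Matrix.mul_assoc]
    rw [Matrix.trace_mul_comm]
    simp only [Matrix.mul_assoc]
  have trB : (Bᴴ * B).trace = (P * Q).trace := by
    rw [hB, hP, hQ, Matrix.conjTranspose_mul, Matrix.conjTranspose_conjTranspose]
    simp only [Matrix.mul_assoc]
    rw [Matrix.trace_mul_comm]
    simp only [Matrix.mul_assoc]
  rw [trA, trB, trC]
  exact cs_herm P Q (Matrix.isHermitian_mul_conjTranspose_self S1)
    (Matrix.isHermitian_mul_conjTranspose_self S2)
end

section
/- Let C and X be Hermitian complex matrices of the same finite size such that both C − X and C + X are positive semidefinite. Then Re Tr(X²) ≤ Re Tr(C²). -/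
open Matrix ComplexOrder

lemma psd_trace_re_nonneg {n : Type*} [Fintype n]
    {A : Matrix n n ℂ} (hA : A.PosSemidef) : 0 ≤ A.trace.re := by
  classical
  simp only [Matrix.trace, Matrix.diag, Complex.re_sum]
  apply Finset.sum_nonneg; intro i _
  have h := hA.dotProduct_mulVec_nonneg (Pi.single i 1)
  have : star (Pi.single i 1 : n → ℂ) ⬝ᵥ A.mulVec (Pi.single i 1) = A i i := by
    simp [dotProduct, Matrix.mulVec, Pi.single_apply]
  rw [this] at h
  simpa using (Complex.le_def.mp h).1

lemma trace_re_nonneg_of_psd_mul {n : Type*} [Fintype n]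
    {A B : Matrix n n ℂ} (hA : A.PosSemidef) (hB : B.PosSemidef) :
    0 ≤ (A * B).trace.re := by
  obtain ⟨Q, rfl⟩ : ∃ Q : Matrix n n ℂ, B = Qᴴ * Q := by
    classical
    open scoped MatrixOrder in
    obtain ⟨X, hX, -, rfl⟩ := CFC.exists_sqrt_of_isSelfAdjoint_of_quasispectrumRestricts
      hB.isHermitian (QuasispectrumRestricts.nnreal_of_nonneg (Matrix.nonneg_iff_posSemidef.mpr hB))
    exact ⟨X, by rw [show Xᴴ = X from hX.star_eq]⟩
  have : (A * (Qᴴ * Q)).trace = (Q * A * Qᴴ).trace := by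
    rw [← mul_assoc, Matrix.trace_mul_comm, ← mul_assoc]
  rw [this]
  exact psd_trace_re_nonneg (hA.mul_mul_conjTranspose_same Q)

/-- If `C` and `X` are Hermitian and both `C - X` and `C + X` are positive
semidefinite, then `Re Tr(X²) ≤ Re Tr(C²)`. -/
theorem trace_sq_le_of_psd_sub_add {n : Type*} [Fintype n]
    (C X : Matrix n n ℂ) (hC : C.IsHermitian) (hX : X.IsHermitian)
    (hsub : (C - X).PosSemidef) (hadd : (C + X).PosSemidef) :
    (X * X).trace.re ≤ (C * C).trace.re := by
  have h := trace_re_nonneg_of_psd_mul hsub hadd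
  have hexp : ((C - X) * (C + X)).trace = (C * C).trace - (X * X).trace := by
    have : (C - X) * (C + X) = C * C + C * X - X * C - X * X := by noncomm_ring
    rw [this]
    simp only [Matrix.trace_sub, Matrix.trace_add]
    rw [Matrix.trace_mul_comm C X]
    ring
  rw [hexp] at h
  simp only [Complex.sub_re] at h
  linarith
end

section
/- Let Λ be a positive definite Hermitian complex matrix and A a positive semidefinite complex matrix of the same finite size. Then (Re Tr A)² ≤ Re Tr(Λ²) · Re Tr(Λ⁻¹ A Λ⁻¹ A). -/
open Matrix ComplexOrder

/-- Inner product of two matrices flattened as vectors equals a trace, when the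
first matrix is Hermitian. -/
lemma inner_eq_trace_of_hermitian {n : Type*} [Fintype n]
    (M N : Matrix n n ℂ) (hM : Mᴴ = M) :
    (inner (𝕜 := ℂ) ((WithLp.equiv 2 _).symm fun p => M p.1 p.2 : EuclideanSpace ℂ (n × n))
      ((WithLp.equiv 2 _).symm fun p => N p.1 p.2)) = (M * N).trace := by
  simp only [PiLp.inner_apply, RCLike.inner_apply, WithLp.equiv_symm_apply, PiLp.toLp_apply,
    Matrix.trace, Matrix.diag, Matrix.mul_apply, Fintype.sum_prod_type]
  rw [Finset.sum_comm]
  refine Finset.sum_congr rfl fun i _ => Finset.sum_congr rfl fun j _ => ?_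
  have h : (starRingEnd ℂ) (M j i) = M i j := by
    conv_rhs => rw [← hM]
    simp [Matrix.conjTranspose_apply]
  rw [h, mul_comm]

lemma posSemidef_trace_re_nonneg {n : Type*} [Fintype n] [DecidableEq n]
    {A : Matrix n n ℂ} (hA : A.PosSemidef) : 0 ≤ A.trace.re := by
  have h : ∀ i, 0 ≤ (A i i).re := by
    intro i
    have h1 := hA.dotProduct_mulVec_nonneg (Pi.single i 1)
    rw [Complex.le_def] at h1
    have h2 : (star (Pi.single i 1) ⬝ᵥ A *ᵥ Pi.single i 1 : ℂ) = A i i := by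
      simp [dotProduct, Matrix.mulVec, Pi.single_apply, Finset.mul_sum,
        apply_ite, Finset.sum_ite_eq, Finset.sum_ite_eq']
    rw [h2] at h1
    exact h1.1
  simpa [Matrix.trace, Matrix.diag, Complex.re_sum] using
    Finset.sum_nonneg fun i _ => h i

set_option maxHeartbeats 2000000 in
/-- For a positive definite Hermitian matrix `Λ` and a positive semidefinite
matrix `A`, `(Re Tr A)² ≤ Re Tr(Λ²) ⬝ Re Tr(Λ⁻¹ A Λ⁻¹ A)`. -/
theorem trace_sq_le_posdef_conj {n : Type*} [Fintype n] [DecidableEq n]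
    (Λ A : Matrix n n ℂ) (hΛ : Λ.PosDef) (hA : A.PosSemidef) :
    (A.trace.re) ^ 2 ≤ (Λ * Λ).trace.re * (Λ⁻¹ * A * Λ⁻¹ * A).trace.re := by
  have hΛinv : (Λ⁻¹).PosDef := hΛ.inv
  set B := (open scoped MatrixOrder in CFC.sqrt (Λ⁻¹)) with hBdef
  have hBherm : Bᴴ = B := (open scoped MatrixOrder in (CFC.sqrt_nonneg (Λ⁻¹)).posSemidef.1)
  have hBB : B * B = Λ⁻¹ := (open scoped MatrixOrder in CFC.sqrt_mul_sqrt_self (Λ⁻¹) hΛinv.posSemidef.nonneg)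
  have hΛunit : IsUnit Λ := hΛ.isUnit
  have hBunit : IsUnit B := by
    rw [Matrix.isUnit_iff_isUnit_det, isUnit_iff_ne_zero]
    intro h0
    have hd : (Λ⁻¹).det = 0 := by rw [← hBB, Matrix.det_mul, h0, mul_zero]
    exact hΛinv.det_pos.ne' (by exact_mod_cast hd)
  set Y := B * A * B with hYdef
  have hYherm : Yᴴ = Y := by
    rw [hYdef]
    simp only [Matrix.conjTranspose_mul, hBherm, hA.1.eq, Matrix.mul_assoc]
  have hBΛB : B * Λ * B = 1 := by
    have hX : (B * Λ * B) * (B * Λ * B) = (B * Λ * B) * 1 := by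
      rw [Matrix.mul_one]
      calc (B * Λ * B) * (B * Λ * B) = B * (Λ * Λ⁻¹) * Λ * B := by
            rw [← hBB]; noncomm_ring
        _ = B * Λ * B := by
            rw [Matrix.mul_nonsing_inv Λ ((Matrix.isUnit_iff_isUnit_det Λ).mp hΛunit),
              Matrix.mul_one]
    exact ((hBunit.mul hΛunit).mul hBunit).mul_left_cancel hX
  have htrA : (Λ * Y).trace = A.trace := by
    calc (Λ * Y).trace = ((Λ * B * A) * B).trace := by
          rw [hYdef]; congr 1; noncomm_ring
      _ = (B * (Λ * B * A)).trace := Matrix.trace_mul_comm _ _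
      _ = ((B * Λ * B) * A).trace := by congr 1; noncomm_ring
      _ = A.trace := by rw [hBΛB, Matrix.one_mul]
  have htrY2 : (Y * Y).trace = (Λ⁻¹ * A * Λ⁻¹ * A).trace := by
    calc (Y * Y).trace = ((B * A * (B * B) * A) * B).trace := by
          rw [hYdef]; congr 1; noncomm_ring
      _ = (B * (B * A * (B * B) * A)).trace := Matrix.trace_mul_comm _ _
      _ = ((B * B) * A * (B * B) * A).trace := by congr 1; noncomm_ring
      _ = (Λ⁻¹ * A * Λ⁻¹ * A).trace := by rw [hBB]
  set x : EuclideanSpace ℂ (n × n) := (WithLp.equiv 2 _).symm fun p => Λ p.1 p.2 with hxdef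
  set y : EuclideanSpace ℂ (n × n) := (WithLp.equiv 2 _).symm fun p => Y p.1 p.2 with hydef
  have hxy : (inner ℂ x y : ℂ) = A.trace := by
    rw [hxdef, hydef, inner_eq_trace_of_hermitian Λ Y hΛ.1.eq, htrA]
  have hxx : (inner ℂ x x : ℂ) = (Λ * Λ).trace :=
    inner_eq_trace_of_hermitian Λ Λ hΛ.1.eq
  have hyy : (inner ℂ y y : ℂ) = (Λ⁻¹ * A * Λ⁻¹ * A).trace := by
    rw [hydef, inner_eq_trace_of_hermitian Y Y hYherm, htrY2]
  have h1 : A.trace.re ≤ ‖x‖ * ‖y‖ := by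
    have := re_inner_le_norm (𝕜 := ℂ) x y
    rwa [hxy] at this
  have hx2 : ‖x‖ ^ 2 = (Λ * Λ).trace.re := by
    rw [← inner_self_eq_norm_sq (𝕜 := ℂ) x, hxx]; simp [RCLike.re_to_complex]
  have hy2 : ‖y‖ ^ 2 = (Λ⁻¹ * A * Λ⁻¹ * A).trace.re := by
    rw [← inner_self_eq_norm_sq (𝕜 := ℂ) y, hyy]; simp [RCLike.re_to_complex]
  have hA0 : 0 ≤ A.trace.re := posSemidef_trace_re_nonneg hA
  calc A.trace.re ^ 2 ≤ (‖x‖ * ‖y‖) ^ 2 := pow_le_pow_left₀ hA0 h1 2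
    _ = ‖x‖ ^ 2 * ‖y‖ ^ 2 := by ring
    _ = _ := by rw [hx2, hy2]
end

section
/- Let ρ be a Hermitian matrix on a bipartite system. Then the square of its partial transpose equals its Choi reduced matrix: (ρ^{T_B})² = ρ^{(2)}, i.e., for all indices, ∑_{(m,n)} ρ^{T_B}((i,j),(m,n)) · ρ^{T_B}((m,n),(k,l)) = ∑_{i'∈α} ∑_{m∈β} ρ((i,m),(i',j)) · conj(ρ((k,m),(i',l))). -/
open Matrix ComplexOrder

/-- The partial transpose on the second factor of a bipartite system. -/
def partialTranspose {α β : Type*} (ρ : Matrix (α × β) (α × β) ℂ) :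
    Matrix (α × β) (α × β) ℂ :=
  fun p q => ρ (p.1, q.2) (q.1, p.2)

/-- The Choi reduced matrix `ρ^{(2)}` of `ρ`. -/
noncomputable def choiReduced {α β : Type*} [Fintype α] [Fintype β]
    (ρ : Matrix (α × β) (α × β) ℂ) : Matrix (α × β) (α × β) ℂ :=
  fun p q => ∑ i' : α, ∑ m : β, ρ (p.1, m) (i', p.2) * star (ρ (q.1, m) (i', q.2))

/-- For a Hermitian `ρ`, the square of the partial transpose equals the Choi
reduced matrix: `(ρ^{T_B})² = ρ^{(2)}` entrywise. -/
theorem partialTranspose_sq_eq_choiReduced {α β : Type*} [Fintype α] [Fintype β]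
    (ρ : Matrix (α × β) (α × β) ℂ) (hρ : ρ.IsHermitian) :
    ∀ i k : α, ∀ j l : β,
      (∑ mn : α × β,
        partialTranspose ρ (i, j) mn * partialTranspose ρ mn (k, l)) =
      ∑ i' : α, ∑ m : β, ρ (i, m) (i', j) * star (ρ (k, m) (i', l)) := by
  intro i k j l
  simp only [partialTranspose]
  rw [Fintype.sum_prod_type]
  refine Finset.sum_congr rfl fun m _ => Finset.sum_congr rfl fun n _ => ?_
  congr 1
  exact (hρ.apply (m, l) (k, n)).symm
end

section
/- Let ρ be a Hermitian matrix on a bipartite system. Then for every natural number k ≥ 1, the 2k-th moment of the partial transpose equals the k-th moment of the Choi reduced matrix: Tr((ρ^{T_B})^{2k}) = Tr((ρ^{(2)})^k). In particular (k = 1), Tr((ρ^{T_B})²) = Tr(ρ^{(2)}) = Tr(ρ²). -/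
open Matrix ComplexOrder

lemma partialTranspose_isHermitian {α β : Type*} (ρ : Matrix (α × β) (α × β) ℂ)
    (hρ : ρ.IsHermitian) : (partialTranspose ρ).IsHermitian := by
  ext p q
  simp only [conjTranspose_apply, partialTranspose]
  rw [← hρ.apply]
  simp [conjTranspose_apply]

lemma choiReduced_eq {α β : Type*} [Fintype α] [Fintype β]
    (ρ : Matrix (α × β) (α × β) ℂ) (hρ : ρ.IsHermitian) :
    choiReduced ρ = partialTranspose ρ * partialTranspose ρ := by
  have hT := partialTranspose_isHermitian ρ hρ
  nth_rewrite 2 [← hT]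
  ext p q
  simp only [choiReduced, mul_apply, conjTranspose_apply, partialTranspose,
    Fintype.sum_prod_type]

/-- For a Hermitian `ρ` and every `k ≥ 1`,
`Tr((ρ^{T_B})^{2k}) = Tr((ρ^{(2)})^k)`; in particular (`k = 1`),
`Tr((ρ^{T_B})²) = Tr(ρ^{(2)}) = Tr(ρ²)`. -/
theorem trace_partialTranspose_pow_eq {α β : Type*} [Fintype α] [Fintype β]
    [DecidableEq α] [DecidableEq β]
    (ρ : Matrix (α × β) (α × β) ℂ) (hρ : ρ.IsHermitian) :
    (∀ k : ℕ, 1 ≤ k →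
      (partialTranspose ρ ^ (2 * k)).trace = (choiReduced ρ ^ k).trace) ∧
    (partialTranspose ρ ^ 2).trace = (choiReduced ρ).trace ∧
    (choiReduced ρ).trace = (ρ * ρ).trace := by
  have hC : choiReduced ρ = partialTranspose ρ ^ 2 := by
    rw [choiReduced_eq ρ hρ, sq]
  refine ⟨fun k _ => by rw [hC, ← pow_mul], ?_, ?_⟩
  · rw [hC]
  · rw [hC, sq, trace_mul_comm]
    simp only [trace, mul_apply, diag_apply, partialTranspose, Fintype.sum_prod_type]
    refine Finset.sum_congr rfl fun x _ => ?_
    rw [Finset.sum_comm]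
    conv_rhs => rw [Finset.sum_comm]
    refine Finset.sum_congr rfl fun a _ => ?_
    rw [Finset.sum_comm]
end

section
/- Let ρ be a positive semidefinite Hermitian matrix on a bipartite system with Tr ρ = 1 (a density matrix), and let σ̄ = (Tr ρ^{(2)})⁻¹ • ρ^{(2)} be the normalized Choi reduced matrix (note Tr ρ^{(2)} = Tr ρ² > 0). Then for every integer k ≥ 2, the even Rényi negativity satisfies log Re Tr((ρ^{T_B})^{2k}) = −(k−1)·S_k(σ̄) − k·S₂(ρ), where S_n(M) = (1/(1−n))·log Re Tr(Mⁿ) denotes the n-th Rényi entropy of a density matrix M. -/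
open Matrix ComplexOrder

/-- The `n`-th Rényi entropy `S_n(M) = (1/(1−n))·log Re Tr(Mⁿ)` of a density
matrix `M`, for `n ≠ 1`. -/
noncomputable def renyiEntropy {γ : Type*} [Fintype γ] [DecidableEq γ] (n : ℕ) (M : Matrix γ γ ℂ) : ℝ :=
  (1 / (1 - (n : ℝ))) * Real.log ((M ^ n).trace.re)

set_option linter.unusedSectionVars false

section Aux
variable {α β : Type*} [Fintype α] [Fintype β] [DecidableEq α] [DecidableEq β]

lemma pt_isHermitian {ρ : Matrix (α × β) (α × β) ℂ} (h : ρ.IsHermitian) :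
    (partialTranspose ρ).IsHermitian := by
  ext p q
  simp only [conjTranspose_apply, partialTranspose]
  exact h.apply _ _

lemma choi_eq_pt_sq {ρ : Matrix (α × β) (α × β) ℂ} (h : ρ.IsHermitian) :
    choiReduced ρ = partialTranspose ρ ^ 2 := by
  ext p q
  rw [sq, mul_apply]
  simp only [choiReduced, partialTranspose, Fintype.sum_prod_type]
  refine Finset.sum_congr rfl fun i' _ => Finset.sum_congr rfl fun m _ => ?_
  rw [h.apply]

lemma trace_pt_sq {ρ : Matrix (α × β) (α × β) ℂ} :
    ((partialTranspose ρ) ^ 2).trace = (ρ ^ 2).trace := by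
  simp only [sq, Matrix.trace, diag_apply, mul_apply, partialTranspose,
    Fintype.sum_prod_type]
  refine Finset.sum_congr rfl fun i _ => ?_
  conv_lhs => rw [Finset.sum_comm]
  conv_rhs => rw [Finset.sum_comm]
  refine Finset.sum_congr rfl fun i' _ => ?_
  rw [Finset.sum_comm]

lemma trace_mul_conjTranspose_self {n : Type*} [Fintype n] (A : Matrix n n ℂ) :
    (A * Aᴴ).trace = ((∑ x : n × n, Complex.normSq (A x.1 x.2) : ℝ) : ℂ) := by
  rw [Fintype.sum_prod_type]
  push_cast
  simp only [Matrix.trace, diag_apply, mul_apply, conjTranspose_apply]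
  refine Finset.sum_congr rfl fun p _ => Finset.sum_congr rfl fun q _ => ?_
  rw [← Complex.mul_conj]
  rfl

lemma herm_pow_ne_zero {n : Type*} [Fintype n] [DecidableEq n]
    {A : Matrix n n ℂ} (h : A.IsHermitian) (hA : A ≠ 0) (m : ℕ) : A ^ m ≠ 0 := by
  intro hm
  apply hA
  -- first, A ^ (2 ^ m) = 0
  have h2 : A ^ (2 ^ m) = 0 := by
    have : A ^ (2 ^ m) = A ^ m * A ^ (2 ^ m - m) := by
      rw [← pow_add, Nat.add_sub_cancel' (Nat.lt_two_pow_self (n := m)).le]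
    rw [this, hm, zero_mul]
  clear hm
  induction m with
  | zero => simpa using h2
  | succ l ih =>
    apply ih
    have : (A ^ 2 ^ l)ᴴ * A ^ 2 ^ l = 0 := by
      rw [(h.pow (2 ^ l)).eq, ← pow_add]
      rw [pow_succ, mul_two] at h2
      exact h2
    exact conjTranspose_mul_self_eq_zero.mp this

end Aux

/-- For a density matrix `ρ` on a bipartite system with `Tr ρ² > 0`, and
`σ̄ = (Tr ρ^{(2)})⁻¹ • ρ^{(2)}` the normalized Choi reduced matrix, the even
Rényi negativity satisfies, for every integer `k ≥ 2`,
`log Re Tr((ρ^{T_B})^{2k}) = −(k−1)·S_k(σ̄) − k·S₂(ρ)`. -/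
theorem even_renyi_negativity_eq {α β : Type*} [Fintype α] [Fintype β]
    [DecidableEq α] [DecidableEq β]
    (ρ : Matrix (α × β) (α × β) ℂ) (hρ : ρ.PosSemidef) (htr : ρ.trace = 1)
    (k : ℕ) (hk : 2 ≤ k) :
    Real.log (((partialTranspose ρ) ^ (2 * k)).trace.re) =
      -((k : ℝ) - 1) * renyiEntropy k (((choiReduced ρ).trace)⁻¹ • choiReduced ρ)
        - (k : ℝ) * renyiEntropy 2 ρ := by
  set T := partialTranspose ρ with hT
  have hHerm : T.IsHermitian := pt_isHermitian hρ.1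
  -- trace of ρ² is a positive real r
  have hρ2 : (ρ ^ 2).trace = ((∑ x : (α × β) × (α × β), Complex.normSq (ρ x.1 x.2) : ℝ) : ℂ) := by
    have h := trace_mul_conjTranspose_self ρ
    rwa [hρ.1.eq, ← sq] at h
  set r : ℝ := ∑ x : (α × β) × (α × β), Complex.normSq (ρ x.1 x.2) with hrdef
  have hρne : ρ ≠ 0 := by
    intro h0
    rw [h0] at htr
    simp [Matrix.trace] at htr
  have hr_pos : 0 < r := by
    obtain ⟨p, q, hpq⟩ : ∃ p q, ρ p q ≠ 0 := by
      by_contra hc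
      push_neg at hc
      exact hρne (by ext p q; simp [hc])
    refine Finset.sum_pos' (fun x _ => Complex.normSq_nonneg _) ⟨(p, q), Finset.mem_univ _, ?_⟩
    exact Complex.normSq_pos.mpr hpq
  -- T ≠ 0
  have hTne : T ≠ 0 := by
    intro h0
    have : (ρ ^ 2).trace = 0 := by rw [← trace_pt_sq, ← hT, h0]; simp
    rw [hρ2] at this
    exact_mod_cast hr_pos.ne' (by exact_mod_cast this)
  -- trace of T^(2k) is a positive real N
  have hTk : T ^ (2 * k) = (T ^ k) * (T ^ k)ᴴ := by
    rw [(hHerm.pow k).eq, ← pow_add, two_mul]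
  have hN : (T ^ (2 * k)).trace =
      ((∑ x : (α × β) × (α × β), Complex.normSq ((T ^ k) x.1 x.2) : ℝ) : ℂ) := by
    rw [hTk]; exact trace_mul_conjTranspose_self _
  set N : ℝ := ∑ x : (α × β) × (α × β), Complex.normSq ((T ^ k) x.1 x.2) with hNdef
  have hN_pos : 0 < N := by
    obtain ⟨p, q, hpq⟩ : ∃ p q, (T ^ k) p q ≠ 0 := by
      by_contra hc
      push_neg at hc
      exact herm_pow_ne_zero hHerm hTne k (by ext p q; simp [hc])
    refine Finset.sum_pos' (fun x _ => Complex.normSq_nonneg _) ⟨(p, q), Finset.mem_univ _, ?_⟩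
    exact Complex.normSq_pos.mpr hpq
  -- choiReduced trace
  have hCtr : (choiReduced ρ).trace = (r : ℂ) := by
    rw [choi_eq_pt_sq hρ.1, ← hT, trace_pt_sq, hρ2]
  -- σ̄ ^ k trace
  have hσk : ((((choiReduced ρ).trace)⁻¹ • choiReduced ρ) ^ k).trace.re = (r ^ k)⁻¹ * N := by
    rw [hCtr, choi_eq_pt_sq hρ.1, ← hT, smul_pow, trace_smul, ← pow_mul, hN]
    rw [smul_eq_mul, ← Complex.ofReal_inv, ← Complex.ofReal_pow, ← Complex.ofReal_mul,
      Complex.ofReal_re, inv_pow]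
  -- renyi entropies
  have hk1 : (1 : ℝ) - (k : ℝ) ≠ 0 := by
    have : (2 : ℝ) ≤ (k : ℝ) := by exact_mod_cast hk
    linarith
  have hS2 : renyiEntropy 2 ρ = - Real.log r := by
    unfold renyiEntropy
    rw [hρ2]
    norm_num
  have hSk : renyiEntropy k (((choiReduced ρ).trace)⁻¹ • choiReduced ρ) =
      (1 / (1 - (k : ℝ))) * (-(k : ℝ) * Real.log r + Real.log N) := by
    unfold renyiEntropy
    rw [hσk, Real.log_mul (by positivity) hN_pos.ne', Real.log_inv, Real.log_pow]
    push_cast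
    ring
  rw [hSk, hS2, hN]
  rw [Complex.ofReal_re]
  field_simp
  ring
end

section
/- Let p : ℝ → ℝ → ℝ and t > 0. Assume that for every (A₁, A₂) ∈ ℝ² there exist s₁, s₂ ∈ ℝ with s₁ + s₂ = A₁ + A₂ and p A₁ A₂ ≤ (p s₁ s₁ + p s₂ s₂)/2. Then for every (A₁, A₂) there exists s ∈ ℝ such that p A₁ A₂ + t·min A₁ A₂ ≤ p s s + t·s; consequently, the supremum of (A₁,A₂) ↦ p A₁ A₂ + t·min A₁ A₂ over ℝ² equals its supremum over the diagonal A₁ = A₂. -/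
/-- If `p` satisfies the splitting bound
`p A₁ A₂ ≤ (p s₁ s₁ + p s₂ s₂)/2` for some `s₁ + s₂ = A₁ + A₂`, and `t > 0`,
then every value of `(A₁,A₂) ↦ p A₁ A₂ + t·min A₁ A₂` is dominated by a value
on the diagonal, and hence the supremum over `ℝ²` equals the supremum over the
diagonal `A₁ = A₂`. -/
theorem maximin_on_diagonal (p : ℝ → ℝ → ℝ) (t : ℝ) (ht : 0 < t)
    (h : ∀ A₁ A₂ : ℝ, ∃ s₁ s₂ : ℝ, s₁ + s₂ = A₁ + A₂ ∧
      p A₁ A₂ ≤ (p s₁ s₁ + p s₂ s₂) / 2) :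
    (∀ A₁ A₂ : ℝ, ∃ s : ℝ, p A₁ A₂ + t * min A₁ A₂ ≤ p s s + t * s) ∧
    (⨆ q : ℝ × ℝ, (p q.1 q.2 + t * min q.1 q.2)) = ⨆ s : ℝ, (p s s + t * s) := by
  have key : ∀ A₁ A₂ : ℝ, ∃ s : ℝ, p A₁ A₂ + t * min A₁ A₂ ≤ p s s + t * s := by
    intro A₁ A₂
    obtain ⟨s₁, s₂, hsum, hp⟩ := h A₁ A₂
    have hmin : min A₁ A₂ ≤ (s₁ + s₂) / 2 := by
      rw [hsum]
      rcases le_total A₁ A₂ with h' | h' <;> simp [min_eq_left, min_eq_right, h'] <;> linarith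
    have havg : p A₁ A₂ + t * min A₁ A₂ ≤
        ((p s₁ s₁ + t * s₁) + (p s₂ s₂ + t * s₂)) / 2 := by
      nlinarith [mul_le_mul_of_nonneg_left hmin ht.le]
    rcases le_total (p s₁ s₁ + t * s₁) (p s₂ s₂ + t * s₂) with h' | h'
    · exact ⟨s₂, by linarith⟩
    · exact ⟨s₁, by linarith⟩
  refine ⟨key, ?_⟩
  rw [iSup, iSup]
  apply csSup_eq_csSup_of_forall_exists_le
  · rintro x ⟨⟨A₁, A₂⟩, rfl⟩
    obtain ⟨s, hs⟩ := key A₁ A₂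
    exact ⟨p s s + t * s, ⟨s, rfl⟩, hs⟩
  · rintro y ⟨s, rfl⟩
    exact ⟨p s s + t * min s s, ⟨(s, s), rfl⟩, by simp⟩
end

section
/- Let p : ℝ → ℝ → ℝ and t > 0. Assume that for every (A₁, A₂) ∈ ℝ² there exist s₁, s₂ ∈ ℝ with s₁ + s₂ = A₁ + A₂ and p A₁ A₂ ≤ (p s₁ s₁ + p s₂ s₂)/2. Then for every (A₁, A₂) there exists s ∈ ℝ such that p A₁ A₂ + t·(A₁ + A₂)/2 ≤ p s s + t·s; consequently, the supremum of (A₁,A₂) ↦ p A₁ A₂ + t·(A₁ + A₂)/2 over ℝ² equals its supremum over the diagonal A₁ = A₂, and coincides with the supremum of (A₁,A₂) ↦ p A₁ A₂ + t·min A₁ A₂. -/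
/-- If `p` satisfies the splitting bound
`p A₁ A₂ ≤ (p s₁ s₁ + p s₂ s₂)/2` for some `s₁ + s₂ = A₁ + A₂`, and `t > 0`,
then every value of the averaged (half-tension) functional
`(A₁,A₂) ↦ p A₁ A₂ + t·(A₁ + A₂)/2` is dominated by a value on the diagonal;
hence its supremum over `ℝ²` equals the supremum over the diagonal `A₁ = A₂`,
and coincides with the supremum of the maximin functional
`(A₁,A₂) ↦ p A₁ A₂ + t·min A₁ A₂`. -/
theorem half_tension_on_diagonal (p : ℝ → ℝ → ℝ) (t : ℝ) (ht : 0 < t)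
    (h : ∀ A₁ A₂ : ℝ, ∃ s₁ s₂ : ℝ, s₁ + s₂ = A₁ + A₂ ∧
      p A₁ A₂ ≤ (p s₁ s₁ + p s₂ s₂) / 2) :
    (∀ A₁ A₂ : ℝ, ∃ s : ℝ, p A₁ A₂ + t * (A₁ + A₂) / 2 ≤ p s s + t * s) ∧
    (⨆ q : ℝ × ℝ, (p q.1 q.2 + t * (q.1 + q.2) / 2)) = (⨆ s : ℝ, (p s s + t * s)) ∧
    (⨆ q : ℝ × ℝ, (p q.1 q.2 + t * (q.1 + q.2) / 2)) =
      ⨆ q : ℝ × ℝ, (p q.1 q.2 + t * min q.1 q.2) := by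
  have key : ∀ A₁ A₂ : ℝ, ∃ s : ℝ, p A₁ A₂ + t * (A₁ + A₂) / 2 ≤ p s s + t * s := by
    intro A₁ A₂
    obtain ⟨s₁, s₂, hsum, hle⟩ := h A₁ A₂
    have havg : p A₁ A₂ + t * (A₁ + A₂) / 2 ≤
        ((p s₁ s₁ + t * s₁) + (p s₂ s₂ + t * s₂)) / 2 := by
      rw [← hsum]; linarith
    rcases le_total (p s₁ s₁ + t * s₁) (p s₂ s₂ + t * s₂) with hc | hc
    · exact ⟨s₂, by linarith⟩
    · exact ⟨s₁, by linarith⟩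
  refine ⟨key, ?_, ?_⟩
  · rw [iSup, iSup]
    apply csSup_eq_csSup_of_forall_exists_le
    · rintro x ⟨q, rfl⟩
      obtain ⟨s, hs⟩ := key q.1 q.2
      exact ⟨p s s + t * s, ⟨s, rfl⟩, hs⟩
    · rintro y ⟨s, rfl⟩
      exact ⟨p s s + t * s, ⟨(s, s), by simp; ring⟩, le_rfl⟩
  · rw [iSup, iSup]
    apply csSup_eq_csSup_of_forall_exists_le
    · rintro x ⟨q, rfl⟩
      obtain ⟨s, hs⟩ := key q.1 q.2
      refine ⟨p s s + t * min s s, ⟨(s, s), rfl⟩, ?_⟩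
      simpa using hs
    · rintro y ⟨q, rfl⟩
      refine ⟨p q.1 q.2 + t * (q.1 + q.2) / 2, ⟨q, rfl⟩, ?_⟩
      have : min q.1 q.2 ≤ (q.1 + q.2) / 2 := by
        rcases le_total q.1 q.2 with hc | hc <;> simp [min_eq_left, min_eq_right, hc] <;> linarith
      nlinarith
end
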